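/- For any graph G and vertex u of degree d, the ratio R(G, u) = Z(G − N[u])/Z(G − u) satisfies 2^{−d} ≤ R(G, u) ≤ 1. -/

import Mathlib

/-- The number of independent sets of `G` contained in the allowed vertex set `A`. -/
def numIndep {W : Type*} [DecidableEq W] (G : SimpleGraph W) [DecidableRel G.Adj]
    (A : Finset W) : ℕ :=
  (A.powerset.filter (fun s => ∀ a ∈ s, ∀ b ∈ s, ¬ G.Adj a b)).card

/-- The ratio `R(G, u) = Z(G − N_G[u]) / Z(G − u)`. -/
noncomputable def ratioR {W : Type*} [Fintype W] [DecidableEq W] (G : SimpleGraph W)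
    [DecidableRel G.Adj] (A : Finset W) (u : W) : ℝ :=
  (numIndep G (A \ insert u (G.neighborFinset u)) : ℝ) / (numIndep G (A.erase u) : ℝ)

lemma numIndep_mono {W : Type*} [DecidableEq W] (G : SimpleGraph W) [DecidableRel G.Adj]
    {A B : Finset W} (h : A ⊆ B) : numIndep G A ≤ numIndep G B := by
  apply Finset.card_le_card
  intro s hs
  simp only [Finset.mem_filter, Finset.mem_powerset] at *
  exact ⟨hs.1.trans h, hs.2⟩

lemma numIndep_pos {W : Type*} [DecidableEq W] (G : SimpleGraph W) [DecidableRel G.Adj]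
    (A : Finset W) : 0 < numIndep G A := by
  apply Finset.card_pos.2
  exact ⟨∅, by simp⟩

lemma numIndep_key {W : Type*} [DecidableEq W] (G : SimpleGraph W) [DecidableRel G.Adj]
    (A N : Finset W) :
    numIndep G A ≤ 2 ^ N.card * numIndep G (A \ N) := by
  classical
  unfold numIndep
  rw [← Finset.card_powerset, ← Finset.card_product]
  apply Finset.card_le_card_of_injOn (fun s => (s ∩ N, s \ N))
  · intro s hs
    simp only [Finset.mem_coe, Finset.mem_filter, Finset.mem_powerset, Finset.mem_product] at *
    refine ⟨Finset.inter_subset_right, ?_, ?_⟩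
    · intro x hx
      rw [Finset.mem_sdiff] at hx ⊢
      exact ⟨hs.1 hx.1, hx.2⟩
    · intro a ha b hb
      exact hs.2 a (Finset.mem_sdiff.mp ha).1 b (Finset.mem_sdiff.mp hb).1
  · intro s _ t _ h
    have h1 : s ∩ N = t ∩ N := congrArg Prod.fst h
    have h2 : s \ N = t \ N := congrArg Prod.snd h
    ext x
    constructor <;> intro hx
    · by_cases hxN : x ∈ N
      · have : x ∈ t ∩ N := h1 ▸ Finset.mem_inter.mpr ⟨hx, hxN⟩
        exact (Finset.mem_inter.mp this).1
      · have : x ∈ t \ N := h2 ▸ Finset.mem_sdiff.mpr ⟨hx, hxN⟩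
        exact (Finset.mem_sdiff.mp this).1
    · by_cases hxN : x ∈ N
      · have : x ∈ s ∩ N := h1 ▸ Finset.mem_inter.mpr ⟨hx, hxN⟩
        exact (Finset.mem_inter.mp this).1
      · have : x ∈ s \ N := h2 ▸ Finset.mem_sdiff.mpr ⟨hx, hxN⟩
        exact (Finset.mem_sdiff.mp this).1

/-- `2^{−d} ≤ R(G, u) ≤ 1` where `d = deg_G(u)`. -/
theorem ratioR_bounds {W : Type*} [Fintype W] [DecidableEq W]
    (G : SimpleGraph W) [DecidableRel G.Adj] (u : W) :
    (2 : ℝ) ^ (-(G.degree u : ℤ)) ≤ ratioR G Finset.univ u ∧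
      ratioR G Finset.univ u ≤ 1 := by
  classical
  set N := G.neighborFinset u with hN
  have hset : (Finset.univ : Finset W) \ insert u N = Finset.univ.erase u \ N := by
    ext x; simp [Finset.mem_sdiff, Finset.mem_insert, and_comm, not_or]
  have hapos : (0 : ℝ) < numIndep G (Finset.univ \ insert u N) :=
    Nat.cast_pos.mpr (numIndep_pos G _)
  have hbpos : (0 : ℝ) < numIndep G ((Finset.univ : Finset W).erase u) :=
    Nat.cast_pos.mpr (numIndep_pos G _)
  constructor
  · have hkey : numIndep G ((Finset.univ : Finset W).erase u) ≤
        2 ^ N.card * numIndep G (Finset.univ \ insert u N) := by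
      rw [hset]
      exact numIndep_key G _ N
    have hdeg : G.degree u = N.card := rfl
    rw [ratioR, hdeg, zpow_neg, zpow_natCast, ← one_div, div_le_div_iff₀ (by positivity) hbpos,
      one_mul]
    calc ((numIndep G ((Finset.univ : Finset W).erase u) : ℝ))
        ≤ 2 ^ N.card * numIndep G (Finset.univ \ insert u N) := by
          exact_mod_cast hkey
      _ = (numIndep G (Finset.univ \ insert u N) : ℝ) * 2 ^ N.card := by ring
  · rw [ratioR, div_le_one hbpos]
    exact_mod_cast numIndep_mono G (by
      intro x hx
      rw [Finset.mem_sdiff] at hx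
      exact Finset.mem_erase.mpr ⟨fun h => hx.2 (by rw [h]; exact Finset.mem_insert_self u N), Finset.mem_univ x⟩)
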